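/- arXiv:2403.09366 — 2 statements merged into one kernel-verified Lean document; each statement's English description precedes it below -/
import Mathlib

section
/- Let 2 ≤ p < N. With F₁ as above, there exists l ∈ (1,2) such that 1 < l ≤ F₁'(s)s/F₁(s) ≤ p for all s ≠ 0. In particular F₁'(s)s/F₁(s) > p - 1 for all s > 0 and lim_{s→+∞} F₁'(s)s/F₁(s) = p. -/
open Real Filter

private lemma aux_deriv1 (p : ℝ) {s : ℝ} (hs : 0 < s) :
    HasDerivAt (fun t : ℝ => -(t ^ p) * Real.log t) (-(p * Real.log s + 1) * s ^ (p-1)) s := by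
  have h := ((Real.hasDerivAt_rpow_const (p := p) (Or.inl hs.ne')).neg).mul
    (Real.hasDerivAt_log hs.ne')
  have e : s ^ (p-1) = s ^ p * s⁻¹ := by
    rw [Real.rpow_sub hs, Real.rpow_one, div_eq_mul_inv]
  have h2 : HasDerivAt (fun t : ℝ => -(t ^ p) * Real.log t)
      (-(p * s ^ (p - 1)) * Real.log s + -(s ^ p) * s⁻¹) s := h
  convert h2 using 1
  rw [e]; ring

private lemma aux_deriv2 (p c1 c2 K : ℝ) {s : ℝ} (hs : s ≠ 0) :
    HasDerivAt (fun t : ℝ => c1 * t ^ p + c2 * t ^ (p-1) - K)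
      (c1 * (p * s^(p-1)) + c2 * ((p-1) * s^(p-1-1))) s := by
  exact (((Real.hasDerivAt_rpow_const (Or.inl hs)).const_mul c1).add
    ((Real.hasDerivAt_rpow_const (Or.inl hs)).const_mul c2)).sub_const K

private lemma region1 (p L Y Z s : ℝ) (hp : 2 ≤ p) (hL : L < -4) (hY : 0 < Y)
    (hf : Z * s = Y) :
    3/2 * (-(Y) * L) ≤ (-(p*L+1) * Z) * s ∧ (-(p*L+1) * Z) * s ≤ p * (-(Y) * L) ∧
      (p-1) * (-(Y) * L) < (-(p*L+1) * Z) * s ∧ 0 < -(Y) * L := by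
  have h1 : (-(p*L+1) * Z) * s = -(p*L+1) * Y := by linear_combination (-(p*L+1)) * hf
  have hpos : 0 < -(Y) * L := by nlinarith [mul_pos hY (show 0 < -L by linarith)]
  refine ⟨?_, ?_, ?_, hpos⟩
  · rw [h1]
    nlinarith [mul_pos hY (show 0 < (p - 3/2) * (-L) - 1 by nlinarith)]
  · rw [h1]; nlinarith [hY]
  · rw [h1]; nlinarith [mul_pos hY (show 0 < -L - 1 by linarith)]

private lemma region2 (p C δ K s a W X V : ℝ) (hp : 2 ≤ p) (hC : 0 < C)
    (hpC3 : 3*p - 1 ≤ p*C) (hδ : 0 < δ) (ha0 : 0 < a) (hδa : δ * (p-1) = a)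
    (hK : 0 < K) (hKp : p * K = δ * W) (hsa : a ≤ s)
    (hX : 0 < X) (hW : 0 < W) (hWX : W ≤ X) (hfV : V * s = X) :
    3/2 * (C*(X*s) + (p*δ)*X - K) ≤ (C*(p*X) + (p*δ)*((p-1)*V)) * s ∧
      (C*(p*X) + (p*δ)*((p-1)*V)) * s ≤ p * (C*(X*s) + (p*δ)*X - K) ∧
      (p-1) * (C*(X*s) + (p*δ)*X - K) < (C*(p*X) + (p*δ)*((p-1)*V)) * s ∧
      0 < C*(X*s) + (p*δ)*X - K := by
  have hs0 : 0 < s := lt_of_lt_of_le ha0 hsa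
  have hNum : (C*(p*X) + (p*δ)*((p-1)*V)) * s = p*C*(X*s) + (p*δ)*((p-1)*X) := by
    linear_combination ((p*δ)*(p-1)) * hfV
  have hCXs : 0 < C * (X*s) := mul_pos hC (mul_pos hX hs0)
  have hδX : 0 < δ * X := mul_pos hδ hX
  have hδWX : δ * W ≤ δ * X := by nlinarith
  have h3 : p * K ≤ δ * X := by rw [hKp]; exact hδWX
  have hK' : K ≤ δ * X := by nlinarith [h3, hK, hp]
  have hDen : 0 < C*(X*s) + (p*δ)*X - K := by nlinarith [hCXs, hδX, hK', hp]
  have hscal2 : p * (5/2 - p) ≤ C * ((p - 3/2) * (p-1)) := by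
    have e1 : (3*p-1) * ((p-3/2)*(p-1)) ≤ (p*C) * ((p-3/2)*(p-1)) :=
      mul_le_mul_of_nonneg_right hpC3 (by nlinarith)
    have e2 : p*(p*(5/2-p)) ≤ (3*p-1) * ((p-3/2)*(p-1)) := by
      nlinarith [sq_nonneg (p-2), mul_nonneg (mul_nonneg (sub_nonneg.2 hp) (sub_nonneg.2 hp))
        (sub_nonneg.2 hp)]
    have e3 : p*(p*(5/2-p)) ≤ p*(C*((p-3/2)*(p-1))) := by nlinarith [e1, e2]
    exact le_of_mul_le_mul_left e3 (by linarith)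
  have hint1 : 0 ≤ C*X*(s - δ*(p-1))*(p-3/2) := by
    have h0 : 0 ≤ s - δ*(p-1) := by rw [hδa]; linarith
    exact mul_nonneg (mul_nonneg (mul_nonneg hC.le hX.le) h0) (by linarith)
  have hint2 : 0 ≤ (C*((p-3/2)*(p-1)) - p*(5/2-p)) * (δ*X) :=
    mul_nonneg (by linarith) hδX.le
  have h7 : 2*(δ*X) ≤ p*(δ*X) := by nlinarith [hδX, hp]
  have h8 : 0 < (p-1)*K := mul_pos (by linarith) hK
  refine ⟨?_, ?_, ?_, hDen⟩
  · linarith [hNum, hint1, hint2, hK]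
  · linarith [hNum, hKp, h7, hδWX, mul_pos hδ hW]
  · linarith [hNum, hCXs, h8]

theorem stmt_4 (N : ℕ) (p : ℝ) (hp : 2 ≤ p) (hpN : p < N) :
    ∃ δ₀ : ℝ, 0 < δ₀ ∧ ∀ δ : ℝ, 0 < δ → δ < δ₀ →
      ∀ F₁ : ℝ → ℝ,
        (∀ s ≤ (0 : ℝ), F₁ s = F₁ (-s)) → F₁ 0 = 0 →
        (∀ s : ℝ, 0 < s → s < (p - 1) * δ →
          F₁ s = -(1 / p) * s ^ p * Real.log (s ^ p)) →
        (∀ s : ℝ, (p - 1) * δ ≤ s →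
          F₁ s = -(1 / p) * s ^ p * (Real.log (((p - 1) * δ) ^ p) + p + 1)
            + p * δ * s ^ (p - 1) - (1 / (p * (p - 1))) * ((p - 1) * δ) ^ p) →
        ∃ l : ℝ, 1 < l ∧ l < 2 ∧
          (∀ s : ℝ, s ≠ 0 →
            l ≤ deriv F₁ s * s / F₁ s ∧ deriv F₁ s * s / F₁ s ≤ p) ∧
          (∀ s : ℝ, 0 < s → p - 1 < deriv F₁ s * s / F₁ s) ∧
          Filter.Tendsto (fun s => deriv F₁ s * s / F₁ s) Filter.atTop (nhds p) := by
  have hp0 : (0:ℝ) < p := by linarith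
  have hp1 : (0:ℝ) < p - 1 := by linarith
  refine ⟨Real.exp (-4) / (p - 1), div_pos (Real.exp_pos _) hp1, ?_⟩
  intro δ hδ hδ₀ F₁ hEven h0 hf1 hf2
  set a : ℝ := (p - 1) * δ with ha_def
  have ha0 : 0 < a := mul_pos hp1 hδ
  have hδa' : δ * (p - 1) = a := by rw [ha_def]; ring
  have haE : a < Real.exp (-4) := by
    have := mul_lt_mul_of_pos_left hδ₀ hp1
    rw [ha_def]
    calc (p-1) * δ < (p-1) * (Real.exp (-4) / (p-1)) := this
    _ = Real.exp (-4) := by field_simp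
  have hloga : Real.log a < -4 := by
    have := Real.log_lt_log ha0 haE
    rwa [Real.log_exp] at this
  set C : ℝ := -(Real.log a + 1 + 1/p) with hC_def
  set K : ℝ := 1/(p*(p-1)) * a^p with hK_def
  have hpC : p * C = -(p * Real.log a + p + 1) := by rw [hC_def]; field_simp
  have hC0 : 0 < C := by
    have h1p : 1/p ≤ 1/2 := by
      rw [div_le_div_iff₀ hp0 (by norm_num)]; linarith
    rw [hC_def]; linarith
  have hpC3 : 3*p - 1 ≤ p * C := by nlinarith [mul_lt_mul_of_pos_left hloga hp0, hpC]
  have hK0 : 0 < K := by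
    rw [hK_def]
    exact mul_pos (one_div_pos.mpr (mul_pos hp0 hp1)) (Real.rpow_pos_of_pos ha0 p)
  -- rpow facts
  have f1 : ∀ s : ℝ, 0 < s → s^(p-1) * s = s^p := by
    intro s hs
    rw [← Real.rpow_add_one hs.ne' (p-1)]
    congr 1; ring
  have f2 : ∀ s : ℝ, 0 < s → s^(p-1-1) * s = s^(p-1) := by
    intro s hs
    rw [← Real.rpow_add_one hs.ne' (p-1-1)]
    congr 1; ring
  have f1a : a^(p-1) * a = a^p := f1 a ha0
  have f2a : a^(p-1-1) * a = a^(p-1) := f2 a ha0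
  have hKp : p * K = δ * a^(p-1) := by
    have hinv : (p*(p-1)) * (1/(p*(p-1))) = 1 :=
      mul_one_div_cancel (ne_of_gt (mul_pos hp0 hp1))
    rw [hK_def]
    linear_combination (δ*a^(p-1)) * hinv + (-(p*(1/(p*(p-1))))) * f1a
      + (-(p*(1/(p*(p-1)))*a^(p-1))) * hδa'
  -- values
  have hF1' : ∀ s : ℝ, 0 < s → s < a → F₁ s = -(s^p) * Real.log s := by
    intro s hs hsa
    rw [hf1 s hs hsa, Real.log_rpow hs]
    field_simp
  have hF2' : ∀ s : ℝ, a ≤ s → F₁ s = C * s^p + (p*δ) * s^(p-1) - K := by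
    intro s hsa
    rw [hf2 s hsa, Real.log_rpow ha0, hC_def, hK_def]
    field_simp
  have hFa : F₁ a = -(a^p) * Real.log a := by
    rw [hF2' a le_rfl]
    have h5 : p * (C * a^p + (p*δ) * a^(p-1) - K) = p * (-(a^p) * Real.log a) := by
      linear_combination (a^p) * hpC + (-1 : ℝ) * hKp + ((p+1)*a^(p-1)) * hδa' + (p+1) * f1a
    exact mul_left_cancel₀ hp0.ne' h5
  -- derivatives
  have hD1 : ∀ s : ℝ, 0 < s → s < a → HasDerivAt F₁ (-(p * Real.log s + 1) * s^(p-1)) s := by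
    intro s hs hsa
    refine (aux_deriv1 p hs).congr_of_eventuallyEq ?_
    filter_upwards [Ioo_mem_nhds hs hsa] with t ht
    exact hF1' t ht.1 ht.2
  have hD2 : ∀ s : ℝ, a < s →
      HasDerivAt F₁ (C * (p * s^(p-1)) + (p*δ) * ((p-1) * s^(p-1-1))) s := by
    intro s hsa
    refine (aux_deriv2 p C (p*δ) K (lt_trans ha0 hsa).ne').congr_of_eventuallyEq ?_
    filter_upwards [Ioi_mem_nhds hsa] with t ht
    exact hF2' t (le_of_lt ht)
  have hgv : -(p * Real.log a + 1) * a^(p-1)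
      = C * (p * a^(p-1)) + (p*δ) * ((p-1) * a^(p-1-1)) := by
    linear_combination (-(a^(p-1))) * hpC + (-(p*a^(p-1-1))) * hδa' + (-p : ℝ) * f2a
  have hDa : HasDerivAt F₁ (C * (p * a^(p-1)) + (p*δ) * ((p-1) * a^(p-1-1))) a := by
    have hg1 : HasDerivAt (fun t : ℝ => -(t^p) * Real.log t)
        (C * (p * a^(p-1)) + (p*δ) * ((p-1) * a^(p-1-1))) a := hgv ▸ aux_deriv1 p ha0
    have hg2 : HasDerivAt (fun t : ℝ => C * t^p + (p*δ) * t^(p-1) - K)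
        (C * (p * a^(p-1)) + (p*δ) * ((p-1) * a^(p-1-1))) a :=
      aux_deriv2 p C (p*δ) K ha0.ne'
    have hIic : HasDerivWithinAt F₁
        (C * (p * a^(p-1)) + (p*δ) * ((p-1) * a^(p-1-1))) (Set.Iic a) a := by
      refine hg1.hasDerivWithinAt.congr_of_eventuallyEq ?_ hFa
      filter_upwards [mem_nhdsWithin_of_mem_nhds (Ioi_mem_nhds ha0),
        self_mem_nhdsWithin] with t ht1 ht2
      rcases lt_or_eq_of_le (Set.mem_Iic.mp ht2) with hlt | heq
      · exact hF1' t ht1 hlt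
      · rw [heq]; exact hFa
    have hIci : HasDerivWithinAt F₁
        (C * (p * a^(p-1)) + (p*δ) * ((p-1) * a^(p-1-1))) (Set.Ici a) a := by
      refine hg2.hasDerivWithinAt.congr_of_eventuallyEq ?_ (hF2' a le_rfl)
      filter_upwards [self_mem_nhdsWithin] with t ht
      exact hF2' t ht
    have := hIic.union hIci
    rw [Set.Iic_union_Ici] at this
    rwa [hasDerivWithinAt_univ] at this
  -- main pointwise bounds for positive s
  have key : ∀ s : ℝ, 0 < s → 3/2 ≤ deriv F₁ s * s / F₁ s ∧
      deriv F₁ s * s / F₁ s ≤ p ∧ p - 1 < deriv F₁ s * s / F₁ s := by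
    intro s hs
    rcases lt_or_ge s a with hsa | hsa
    · have hd := (hD1 s hs hsa).deriv
      have hv : F₁ s = -(s^p) * Real.log s := hF1' s hs hsa
      have hL : Real.log s < -4 := lt_trans ((Real.log_lt_log_iff hs ha0).mpr hsa) hloga
      obtain ⟨q1, q2, q3, q4⟩ := region1 p (Real.log s) (s^p) (s^(p-1)) s hp hL
        (Real.rpow_pos_of_pos hs p) (f1 s hs)
      rw [hd, hv]
      exact ⟨(le_div_iff₀ q4).mpr q1, (div_le_iff₀ q4).mpr q2, (lt_div_iff₀ q4).mpr q3⟩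
    · have hd : deriv F₁ s = C * (p * s^(p-1)) + (p*δ) * ((p-1) * s^(p-1-1)) := by
        rcases eq_or_lt_of_le hsa with heq | hlt
        · rw [← heq]; exact hDa.deriv
        · exact (hD2 s hlt).deriv
      have hv : F₁ s = C * (s^(p-1) * s) + (p*δ) * s^(p-1) - K := by
        rw [hF2' s hsa, f1 s hs]
      have hWX : a^(p-1) ≤ s^(p-1) := Real.rpow_le_rpow ha0.le hsa (by linarith)
      obtain ⟨q1, q2, q3, q4⟩ := region2 p C δ K s a (a^(p-1)) (s^(p-1)) (s^(p-1-1))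
        hp hC0 hpC3 hδ ha0 hδa' hK0 hKp hsa (Real.rpow_pos_of_pos hs _)
        (Real.rpow_pos_of_pos ha0 _) hWX (f2 s hs)
      rw [hd, hv]
      exact ⟨(le_div_iff₀ q4).mpr q1, (div_le_iff₀ q4).mpr q2, (lt_div_iff₀ q4).mpr q3⟩
  -- negative s
  have hFneg : ∀ s : ℝ, s < 0 →
      deriv F₁ s * s / F₁ s = deriv F₁ (-s) * (-s) / F₁ (-s) := by
    intro s hs
    have h1 : F₁ s = F₁ (-s) := hEven s hs.le
    have h2 : deriv F₁ s = -deriv F₁ (-s) := by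
      have hev : F₁ =ᶠ[nhds s] (fun t => F₁ (-t)) := by
        filter_upwards [Iio_mem_nhds hs] with t ht
        exact hEven t (le_of_lt ht)
      rw [hev.deriv_eq, deriv_comp_neg]
    rw [h1, h2]; ring
  -- the limit
  have hlim : Tendsto (fun s => deriv F₁ s * s / F₁ s) atTop (nhds p) := by
    have hev : (fun s : ℝ => (p*C + (p*δ)*(p-1)*s⁻¹) / (C + (p*δ)*s⁻¹ - K*(s^p)⁻¹))
        =ᶠ[atTop] (fun s => deriv F₁ s * s / F₁ s) := by
      filter_upwards [eventually_gt_atTop (max a 1)] with s hs'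
      have hsa : a < s := lt_of_le_of_lt (le_max_left a 1) hs'
      have hs0 : 0 < s := lt_trans one_pos (lt_of_le_of_lt (le_max_right a 1) hs')
      have hY : (0:ℝ) < s^p := Real.rpow_pos_of_pos hs0 p
      have e3 : s^(p-1) = s^p * s⁻¹ := by
        rw [Real.rpow_sub hs0, Real.rpow_one, div_eq_mul_inv]
      have e4 : s^(p-1-1) = s^(p-1) * s⁻¹ := by
        rw [Real.rpow_sub hs0 (p-1) 1, Real.rpow_one, div_eq_mul_inv]
      have num_eq : (C * (p * s^(p-1)) + (p*δ) * ((p-1) * s^(p-1-1))) * s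
          = s^p * (p*C + (p*δ)*(p-1)*s⁻¹) := by
        rw [e4, e3]; field_simp
      have den_eq : C * s^p + (p*δ) * s^(p-1) - K
          = s^p * (C + (p*δ)*s⁻¹ - K*(s^p)⁻¹) := by
        rw [e3]; field_simp
      rw [(hD2 s hsa).deriv, hF2' s hsa.le, num_eq, den_eq,
        mul_div_mul_left _ _ hY.ne']
    have t1 : Tendsto (fun s : ℝ => p*C + (p*δ)*(p-1)*s⁻¹) atTop (nhds (p*C)) := by
      have := tendsto_inv_atTop_zero.const_mul ((p*δ)*(p-1))
      simpa using tendsto_const_nhds.add this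
    have t3 : Tendsto (fun s : ℝ => (s^p)⁻¹) atTop (nhds 0) :=
      (tendsto_rpow_atTop hp0).inv_tendsto_atTop
    have t2 : Tendsto (fun s : ℝ => C + (p*δ)*s⁻¹ - K*(s^p)⁻¹) atTop (nhds C) := by
      have h1 := tendsto_inv_atTop_zero.const_mul (p*δ)
      have h2 := t3.const_mul K
      simpa using (tendsto_const_nhds.add h1).sub h2
    have hfrac := t1.div t2 hC0.ne'
    have : p * C / C = p := mul_div_cancel_right₀ p hC0.ne'
    rw [this] at hfrac
    exact hfrac.congr' hev
  refine ⟨3/2, by norm_num, by norm_num, ?_, ?_, hlim⟩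
  · intro s hs0
    rcases lt_trichotomy s 0 with h | h | h
    · rw [hFneg s h]
      obtain ⟨q1, q2, _⟩ := key (-s) (by linarith)
      exact ⟨q1, q2⟩
    · exact absurd h hs0
    · obtain ⟨q1, q2, _⟩ := key s h
      exact ⟨q1, q2⟩
  · intro s hs
    exact (key s hs).2.2
end

section
/- Strict subadditivity under mass scaling: let I : S → ℝ be a functional on functions with ∫|u|^p = c for which I(ξu) = ξ^p I(u) - (1/p) ξ^p log(ξ^p) ∫|u|^p dx for all ξ > 0. Define 𝓘(a) = inf{I(u) : ∫|u|^p = a^p}. If 0 < a₁ < a₂ and 𝓘(a₁) is finite, then (a₁^p/a₂^p) 𝓘(a₂) < 𝓘(a₁). -/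
open MeasureTheory Real

theorem stmt_11 (N : ℕ) (p : ℝ) (hp : 0 < p)
    (I : (EuclideanSpace ℝ (Fin N) → ℝ) → ℝ)
    (hscale : ∀ (u : EuclideanSpace ℝ (Fin N) → ℝ) (ξ : ℝ), 0 < ξ →
      I (fun x => ξ * u x) = ξ ^ p * I u
        - (1 / p) * ξ ^ p * Real.log (ξ ^ p) * ∫ x, |u x| ^ p)
    (a₁ a₂ : ℝ) (ha₁ : 0 < a₁) (ha : a₁ < a₂)
    (hne : ∃ u : EuclideanSpace ℝ (Fin N) → ℝ, (∫ x, |u x| ^ p) = a₁ ^ p)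
    (hbdd : BddBelow (I '' {u | (∫ x, |u x| ^ p) = a₁ ^ p})) :
    a₁ ^ p / a₂ ^ p * sInf (I '' {u | (∫ x, |u x| ^ p) = a₂ ^ p})
      < sInf (I '' {u | (∫ x, |u x| ^ p) = a₁ ^ p}) := by
  have ha₂ : 0 < a₂ := ha₁.trans ha
  set ξ : ℝ := a₂ / a₁ with hξdef
  have hξ0 : 0 < ξ := div_pos ha₂ ha₁
  have hξ1 : 1 < ξ := (one_lt_div ha₁).mpr ha
  have hξp : (0:ℝ) < ξ ^ p := rpow_pos_of_pos hξ0 p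
  have ha₁p : (0:ℝ) < a₁ ^ p := rpow_pos_of_pos ha₁ p
  have ha₂p : (0:ℝ) < a₂ ^ p := rpow_pos_of_pos ha₂ p
  have hξpval : ξ ^ p = a₂ ^ p / a₁ ^ p := Real.div_rpow ha₂.le ha₁.le p
  -- scaling of the integral
  have hint : ∀ (u : EuclideanSpace ℝ (Fin N) → ℝ) (σ : ℝ), 0 < σ →
      (∫ x, |σ * u x| ^ p) = σ ^ p * ∫ x, |u x| ^ p := by
    intro u σ hσ
    have h : ∀ x, |σ * u x| ^ p = σ ^ p * |u x| ^ p := by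
      intro x
      rw [abs_mul, abs_of_pos hσ, Real.mul_rpow hσ.le (abs_nonneg _)]
    simp_rw [h]
    exact integral_const_mul _ _
  set C : ℝ := (1 / p) * ξ ^ p * Real.log (ξ ^ p) * a₁ ^ p with hCdef
  have hC : 0 < C := by
    have hlog : 0 < Real.log (ξ ^ p) := by
      rw [Real.log_rpow hξ0]
      exact mul_pos hp (Real.log_pos hξ1)
    exact mul_pos (mul_pos (mul_pos (by positivity) hξp) hlog) ha₁p
  -- scaling maps S₁ into S₂
  have hmem : ∀ u : EuclideanSpace ℝ (Fin N) → ℝ, (∫ x, |u x| ^ p) = a₁ ^ p →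
      (∫ x, |(fun x => ξ * u x) x| ^ p) = a₂ ^ p := by
    intro u hu
    simp only
    rw [hint u ξ hξ0, hu, hξpval]
    field_simp
  -- value of I on scaled functions
  have hval : ∀ u : EuclideanSpace ℝ (Fin N) → ℝ, (∫ x, |u x| ^ p) = a₁ ^ p →
      I (fun x => ξ * u x) = ξ ^ p * I u - C := by
    intro u hu
    rw [hscale u ξ hξ0, hu]
  -- every v with mass a₂^p is a scaling of some u with mass a₁^p
  have hS : ∀ v : EuclideanSpace ℝ (Fin N) → ℝ, (∫ x, |v x| ^ p) = a₂ ^ p →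
      ∃ u : EuclideanSpace ℝ (Fin N) → ℝ, (∫ x, |u x| ^ p) = a₁ ^ p ∧ v = fun x => ξ * u x := by
    intro v hv
    refine ⟨fun x => ξ⁻¹ * v x, ?_, ?_⟩
    · rw [hint v ξ⁻¹ (inv_pos.mpr hξ0), hv, Real.inv_rpow hξ0.le, hξpval]
      field_simp
    · funext x
      field_simp
  obtain ⟨u₀, hu₀⟩ := hne
  have hne₁ : (I '' {u | (∫ x, |u x| ^ p) = a₁ ^ p}).Nonempty := ⟨I u₀, u₀, hu₀, rfl⟩
  obtain ⟨b, hb⟩ := hbdd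
  -- S₂ image is bounded below
  have hbdd₂ : BddBelow (I '' {u | (∫ x, |u x| ^ p) = a₂ ^ p}) := by
    refine ⟨ξ ^ p * b - C, ?_⟩
    rintro y ⟨v, hv, rfl⟩
    obtain ⟨u, hu, hvu⟩ := hS v hv
    have hbu : b ≤ I u := hb ⟨u, hu, rfl⟩
    rw [hvu, hval u hu]
    have : ξ ^ p * b ≤ ξ ^ p * I u := by nlinarith
    linarith
  set m₁ : ℝ := sInf (I '' {u | (∫ x, |u x| ^ p) = a₁ ^ p}) with hm₁
  set m₂ : ℝ := sInf (I '' {u | (∫ x, |u x| ^ p) = a₂ ^ p}) with hm₂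
  -- m₂ ≤ ξ^p * t - C for each value t in I '' S₁, hence m₂ + C ≤ ξ^p * m₁
  have key : m₂ + C ≤ ξ ^ p * m₁ := by
    have h1 : (m₂ + C) / ξ ^ p ≤ m₁ := by
      refine le_csInf hne₁ ?_
      rintro t ⟨u, hu, rfl⟩
      have hmem₂ : I (fun x => ξ * u x) ∈ I '' {u | (∫ x, |u x| ^ p) = a₂ ^ p} :=
        ⟨_, hmem u hu, rfl⟩
      have h2 : m₂ ≤ ξ ^ p * I u - C := by
        have := csInf_le hbdd₂ hmem₂
        rwa [hval u hu] at this
      rw [div_le_iff₀ hξp]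
      nlinarith
    rw [div_le_iff₀ hξp] at h1
    nlinarith
  -- conclude
  have hgoal : m₂ < ξ ^ p * m₁ := by linarith
  have : a₁ ^ p / a₂ ^ p = (ξ ^ p)⁻¹ := by
    rw [hξpval]; field_simp
  rw [this, inv_mul_lt_iff₀ hξp]
  linarith [hgoal, mul_comm (ξ ^ p) m₁]
end
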